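/- Define the differential operator W_j := ⟨ζ⟩^{-1}(hD_{z_j} − ζ_j) + (1/2)⟨ζ⟩^{-3} ζ_j (hD_z − ζ)² − i h D_{ζ_j} − (n/2) h ⟨ζ⟩^{-2} ζ_j acting in the variables (z,ζ) ∈ ℂⁿ×ℂⁿ (with D = (1/i)∂ and (hD_z − ζ)² = ∑_k(hD_{z_k} − ζ_k)²). Then for every y ∈ ℝⁿ, W_j annihilates the function (z,ζ) ↦ exp((i/h)(⟨z − y, ζ⟩ + (i/2)⟨ζ⟩(z−y)²)). -/

import Mathlib

set_option synthInstance.maxHeartbeats 1000000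
set_option maxHeartbeats 4000000


open Complex

noncomputable section

/-- The FBI exponential `exp((i/h)(⟨z−y,ζ⟩ + (i/2)⟨ζ⟩(z−y)²))` as a function of
`(z,ζ) ∈ ℂⁿ×ℂⁿ`, for a fixed real `y`. -/
def fbiExp (n : ℕ) (h : ℝ) (y : Fin n → ℝ)
    (p : (Fin n → ℂ) × (Fin n → ℂ)) : ℂ :=
  Complex.exp ((Complex.I / (h : ℂ)) *
    ((∑ k, (p.1 k - (y k : ℂ)) * p.2 k) +
      (Complex.I / 2) * ((1 + ∑ k, (p.2 k) ^ 2) ^ ((1 : ℂ) / 2)) *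
        ∑ k, (p.1 k - (y k : ℂ)) ^ 2))

/-- The operator
`W_j = ⟨ζ⟩^{-1}(hD_{z_j} − ζ_j) + (1/2)⟨ζ⟩^{-3}ζ_j(hD_z − ζ)² − ihD_{ζ_j} − (n/2)h⟨ζ⟩^{-2}ζ_j`. -/
def Wop (n : ℕ) (h : ℝ) (j : Fin n)
    (f : (Fin n → ℂ) × (Fin n → ℂ) → ℂ)
    (p : (Fin n → ℂ) × (Fin n → ℂ)) : ℂ :=
  let br : ℂ := (1 + ∑ k, (p.2 k) ^ 2) ^ ((1 : ℂ) / 2)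
  br⁻¹ * (((h : ℂ) / Complex.I) * fderiv ℂ f p (Pi.single j 1, 0) - p.2 j * f p) +
  (1 / 2) * (br ^ 3)⁻¹ * p.2 j *
    (∑ k, (((h : ℂ) / Complex.I) *
        fderiv ℂ (fun q : (Fin n → ℂ) × (Fin n → ℂ) =>
          ((h : ℂ) / Complex.I) * fderiv ℂ f q (Pi.single k 1, 0) - q.2 k * f q)
          p (Pi.single k 1, 0) -
      p.2 k * (((h : ℂ) / Complex.I) * fderiv ℂ f p (Pi.single k 1, 0) - p.2 k * f p))) -
  Complex.I * (((h : ℂ) / Complex.I) * fderiv ℂ f p (0, Pi.single j 1)) -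
  ((n : ℂ) / 2) * (h : ℂ) * (br ^ 2)⁻¹ * p.2 j * f p

namespace FBIAux

open ContinuousLinearMap

abbrev V (n : ℕ) := (Fin n → ℂ) × (Fin n → ℂ)

lemma fderiv_fbiExp (n : ℕ) (h : ℝ) (y : Fin n → ℝ) (q : V n)
    (hq : (1 + ∑ k, (q.2 k) ^ 2) ∈ slitPlane) (v : V n) :
    fderiv ℂ (fbiExp n h y) q v =
      (Complex.I / (h : ℂ)) *
        ((∑ k, ((q.1 k - (y k : ℂ)) * v.2 k + q.2 k * v.1 k)) +
          (Complex.I / 2) * (((1:ℂ)/2) * ((1 + ∑ k, (q.2 k) ^ 2) ^ ((1:ℂ)/2 - 1)) *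
            (∑ k, (q.2 k * v.2 k + q.2 k * v.2 k))) * (∑ k, (q.1 k - (y k : ℂ)) ^ 2) +
          (Complex.I / 2) * ((1 + ∑ k, (q.2 k) ^ 2) ^ ((1 : ℂ) / 2)) *
            (∑ k, ((q.1 k - (y k : ℂ)) * v.1 k + (q.1 k - (y k : ℂ)) * v.1 k))) * fbiExp n h y q := by
  have hfun : fbiExp n h y = (fun q : V n => Complex.exp ((Complex.I / (h : ℂ)) *
      ((∑ k, (q.1 k - (y k : ℂ)) * q.2 k) +
        (Complex.I / 2) * ((1 + ∑ k, q.2 k * q.2 k) ^ ((1 : ℂ) / 2)) *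
          ∑ k, (q.1 k - (y k : ℂ)) * (q.1 k - (y k : ℂ))))) := by
    funext q; simp only [fbiExp, pow_two]
  have hz : ∀ k : Fin n, HasFDerivAt (fun q : V n => q.1 k)
      ((proj k).comp (fst ℂ (Fin n → ℂ) (Fin n → ℂ))) q :=
    fun k => ((proj k).comp (fst ℂ (Fin n → ℂ) (Fin n → ℂ))).hasFDerivAt
  have hzeta : ∀ k : Fin n, HasFDerivAt (fun q : V n => q.2 k)
      ((proj k).comp (snd ℂ (Fin n → ℂ) (Fin n → ℂ))) q :=
    fun k => ((proj k).comp (snd ℂ (Fin n → ℂ) (Fin n → ℂ))).hasFDerivAt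
  have hw : ∀ k : Fin n, HasFDerivAt (fun q : V n => q.1 k - (y k : ℂ))
      ((proj k).comp (fst ℂ (Fin n → ℂ) (Fin n → ℂ))) q := fun k => (hz k).sub_const _
  have hS := HasFDerivAt.fun_sum (fun k (_ : k ∈ Finset.univ) => (hw k).fun_mul (hzeta k))
  have hs := (HasFDerivAt.fun_sum (fun k (_ : k ∈ Finset.univ) => (hzeta k).fun_mul (hzeta k))).const_add (1:ℂ)
  have hq' : (1 + ∑ k, q.2 k * q.2 k) ∈ slitPlane := by
    simpa only [pow_two] using hq
  have hbr := hs.cpow (hasFDerivAt_const ((1:ℂ)/2) q) hq'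
  have hQ := HasFDerivAt.fun_sum (fun k (_ : k ∈ Finset.univ) => (hw k).fun_mul (hw k))
  have hphi := hS.fun_add ((hbr.const_mul (Complex.I/2)).fun_mul hQ)
  have hF := (hphi.const_mul (Complex.I/(h:ℂ))).cexp
  rw [hfun, hF.fderiv]
  simp only [ContinuousLinearMap.add_apply, ContinuousLinearMap.smul_apply,
    ContinuousLinearMap.comp_apply, ContinuousLinearMap.coe_sum', Finset.sum_apply,
    ContinuousLinearMap.proj_apply, ContinuousLinearMap.coe_fst', ContinuousLinearMap.coe_snd',
    ContinuousLinearMap.zero_apply, smul_eq_mul, mul_zero, add_zero, zero_add, smul_zero,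
    ← pow_two]
  ring

lemma fderiv_fbiExp_z (n : ℕ) (h : ℝ) (y : Fin n → ℝ) (q : V n)
    (hq : (1 + ∑ k, (q.2 k) ^ 2) ∈ slitPlane) (m : Fin n) :
    fderiv ℂ (fbiExp n h y) q (Pi.single m 1, 0) =
      (Complex.I / (h : ℂ)) *
        (q.2 m + Complex.I * ((1 + ∑ k, (q.2 k) ^ 2) ^ ((1 : ℂ) / 2)) * (q.1 m - (y m : ℂ)))
        * fbiExp n h y q := by
  rw [fderiv_fbiExp n h y q hq]
  simp only [Pi.single_apply, Pi.zero_apply, mul_zero, zero_mul, add_zero, zero_add,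
    Finset.sum_const_zero, mul_ite, mul_one, Finset.sum_ite_eq', Finset.mem_univ, if_true,
    ite_mul, Finset.sum_add_distrib]
  ring

lemma fderiv_fbiExp_zeta (n : ℕ) (h : ℝ) (y : Fin n → ℝ) (q : V n)
    (hq : (1 + ∑ k, (q.2 k) ^ 2) ∈ slitPlane) (m : Fin n) :
    fderiv ℂ (fbiExp n h y) q (0, Pi.single m 1) =
      (Complex.I / (h : ℂ)) *
        ((q.1 m - (y m : ℂ)) + (Complex.I / 2) *
          (q.2 m / ((1 + ∑ k, (q.2 k) ^ 2) ^ ((1 : ℂ) / 2))) * (∑ k, (q.1 k - (y k : ℂ)) ^ 2))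
        * fbiExp n h y q := by
  rw [fderiv_fbiExp n h y q hq]
  have he : ((1:ℂ)/2 - 1) = -(1/2) := by norm_num
  rw [he, Complex.cpow_neg]
  simp only [Pi.single_apply, Pi.zero_apply, mul_zero, zero_mul, add_zero, zero_add,
    Finset.sum_const_zero, mul_ite, mul_one, Finset.sum_ite_eq', Finset.mem_univ, if_true,
    ite_mul, Finset.sum_add_distrib]
  ring

lemma fderiv_G (n : ℕ) (h : ℝ) (y : Fin n → ℝ) (q : V n)
    (hq : (1 + ∑ k, (q.2 k) ^ 2) ∈ slitPlane) (m : Fin n) :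
    fderiv ℂ (fun q : V n => Complex.I * ((1 + ∑ k, (q.2 k) ^ 2) ^ ((1 : ℂ) / 2)) *
        (q.1 m - (y m : ℂ)) * fbiExp n h y q) q (Pi.single m 1, 0) =
      Complex.I * ((1 + ∑ k, (q.2 k) ^ 2) ^ ((1 : ℂ) / 2)) * fbiExp n h y q +
      Complex.I * ((1 + ∑ k, (q.2 k) ^ 2) ^ ((1 : ℂ) / 2)) * (q.1 m - (y m : ℂ)) *
        ((Complex.I / (h : ℂ)) *
          (q.2 m + Complex.I * ((1 + ∑ k, (q.2 k) ^ 2) ^ ((1 : ℂ) / 2)) * (q.1 m - (y m : ℂ)))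
          * fbiExp n h y q) := by
  have hz : ∀ k : Fin n, HasFDerivAt (fun q : V n => q.1 k)
      ((proj k).comp (fst ℂ (Fin n → ℂ) (Fin n → ℂ))) q :=
    fun k => ((proj k).comp (fst ℂ (Fin n → ℂ) (Fin n → ℂ))).hasFDerivAt
  have hzeta : ∀ k : Fin n, HasFDerivAt (fun q : V n => q.2 k)
      ((proj k).comp (snd ℂ (Fin n → ℂ) (Fin n → ℂ))) q :=
    fun k => ((proj k).comp (snd ℂ (Fin n → ℂ) (Fin n → ℂ))).hasFDerivAt
  have hw : ∀ k : Fin n, HasFDerivAt (fun q : V n => q.1 k - (y k : ℂ))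
      ((proj k).comp (fst ℂ (Fin n → ℂ) (Fin n → ℂ))) q := fun k => (hz k).sub_const _
  have hS := HasFDerivAt.fun_sum (fun k (_ : k ∈ Finset.univ) => (hw k).fun_mul (hzeta k))
  have hs := (HasFDerivAt.fun_sum (fun k (_ : k ∈ Finset.univ) => (hzeta k).fun_mul (hzeta k))).const_add (1:ℂ)
  have hq' : (1 + ∑ k, q.2 k * q.2 k) ∈ slitPlane := by
    simpa only [pow_two] using hq
  have hbr := hs.cpow (hasFDerivAt_const ((1:ℂ)/2) q) hq'
  have hQ := HasFDerivAt.fun_sum (fun k (_ : k ∈ Finset.univ) => (hw k).fun_mul (hw k))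
  have hphi := hS.fun_add ((hbr.const_mul (Complex.I/2)).fun_mul hQ)
  have hF := (hphi.const_mul (Complex.I/(h:ℂ))).cexp
  have hG := ((hbr.const_mul Complex.I).fun_mul (hw m)).fun_mul hF
  simp only [fbiExp, pow_two]
  rw [hG.fderiv]
  simp only [ContinuousLinearMap.add_apply, ContinuousLinearMap.smul_apply,
    ContinuousLinearMap.comp_apply, ContinuousLinearMap.coe_sum', Finset.sum_apply,
    ContinuousLinearMap.proj_apply, ContinuousLinearMap.coe_fst', ContinuousLinearMap.coe_snd',
    ContinuousLinearMap.zero_apply, smul_eq_mul, mul_zero, add_zero, zero_add, smul_zero,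
    Pi.single_apply, Pi.zero_apply, zero_mul, Finset.sum_const_zero, mul_ite, mul_one,
    Finset.sum_ite_eq', Finset.mem_univ, if_true, ite_mul, Finset.sum_add_distrib,
    ← pow_two]
  ring

end FBIAux

/-- For every `y ∈ ℝⁿ`, the operator `W_j` annihilates the FBI exponential
`(z,ζ) ↦ exp((i/h)(⟨z−y,ζ⟩ + (i/2)⟨ζ⟩(z−y)²))` (away from the branch cut of `⟨ζ⟩`). -/
theorem Wop_annihilates_fbiExp (n : ℕ) (h : ℝ) (hh : 0 < h) (y : Fin n → ℝ)
    (j : Fin n) (p : (Fin n → ℂ) × (Fin n → ℂ))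
    (hbranch : ¬((1 + ∑ k, (p.2 k) ^ 2).im = 0 ∧ (1 + ∑ k, (p.2 k) ^ 2).re ≤ 0)) :
    Wop n h j (fbiExp n h y) p = 0 := by
  classical
  push_neg at hbranch
  have hq : (1 + ∑ k, (p.2 k) ^ 2) ∈ slitPlane := by
    rw [Complex.mem_slitPlane_iff]
    rcases eq_or_ne (1 + ∑ k, (p.2 k) ^ 2).im 0 with him | him
    · exact Or.inl (hbranch him)
    · exact Or.inr him
  have hs0 : (1 + ∑ k, (p.2 k) ^ 2) ≠ 0 := Complex.slitPlane_ne_zero hq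
  have hBne : ((1 + ∑ k, (p.2 k) ^ 2) ^ ((1 : ℂ) / 2)) ≠ 0 := by
    rw [Ne, Complex.cpow_eq_zero_iff]
    rintro ⟨h1, -⟩; exact hs0 h1
  have hhne : (h : ℂ) ≠ 0 := by exact_mod_cast hh.ne'
  have hIne : Complex.I ≠ 0 := Complex.I_ne_zero
  -- the open set where the branch condition holds
  have hopen : IsOpen {q : FBIAux.V n | (1 + ∑ k, (q.2 k) ^ 2) ∈ slitPlane} := by
    have : Continuous (fun q : FBIAux.V n => 1 + ∑ k, (q.2 k) ^ 2) := by fun_prop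
    exact Complex.isOpen_slitPlane.preimage this
  have hmem : p ∈ {q : FBIAux.V n | (1 + ∑ k, (q.2 k) ^ 2) ∈ slitPlane} := hq
  have hnhds : ∀ᶠ q in nhds p, (1 + ∑ k, (q.2 k) ^ 2) ∈ slitPlane :=
    hopen.eventually_mem hmem
  -- the inner function equals G near p
  have hinner : ∀ m : Fin n,
      fderiv ℂ (fun q : FBIAux.V n =>
          ((h : ℂ) / Complex.I) * fderiv ℂ (fbiExp n h y) q (Pi.single m 1, 0) -
            q.2 m * fbiExp n h y q) p (Pi.single m 1, 0) =
      fderiv ℂ (fun q : FBIAux.V n => Complex.I * ((1 + ∑ k, (q.2 k) ^ 2) ^ ((1 : ℂ) / 2)) *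
          (q.1 m - (y m : ℂ)) * fbiExp n h y q) p (Pi.single m 1, 0) := by
    intro m
    have heq : (fun q : FBIAux.V n =>
        ((h : ℂ) / Complex.I) * fderiv ℂ (fbiExp n h y) q (Pi.single m 1, 0) -
          q.2 m * fbiExp n h y q) =ᶠ[nhds p]
        (fun q : FBIAux.V n => Complex.I * ((1 + ∑ k, (q.2 k) ^ 2) ^ ((1 : ℂ) / 2)) *
          (q.1 m - (y m : ℂ)) * fbiExp n h y q) := by
      filter_upwards [hnhds] with q hq'
      rw [FBIAux.fderiv_fbiExp_z n h y q hq' m]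
      field_simp
      ring_nf
    rw [heq.fderiv_eq]
  simp only [Wop]
  rw [FBIAux.fderiv_fbiExp_z n h y p hq j, FBIAux.fderiv_fbiExp_zeta n h y p hq j]
  have hsum : ∀ m : Fin n,
      ((h : ℂ) / Complex.I) *
        fderiv ℂ (fun q : FBIAux.V n =>
          ((h : ℂ) / Complex.I) * fderiv ℂ (fbiExp n h y) q (Pi.single m 1, 0) -
            q.2 m * fbiExp n h y q) p (Pi.single m 1, 0) -
      p.2 m * (((h : ℂ) / Complex.I) * fderiv ℂ (fbiExp n h y) p (Pi.single m 1, 0) -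
        p.2 m * fbiExp n h y p) =
      (h : ℂ) * ((1 + ∑ k, (p.2 k) ^ 2) ^ ((1 : ℂ) / 2)) * fbiExp n h y p -
        ((1 + ∑ k, (p.2 k) ^ 2) ^ ((1 : ℂ) / 2)) ^ 2 * (p.1 m - (y m : ℂ)) ^ 2 * fbiExp n h y p := by
    intro m
    rw [hinner m, FBIAux.fderiv_G n h y p hq m, FBIAux.fderiv_fbiExp_z n h y p hq m]
    field_simp
    generalize ((1 + ∑ k, (p.2 k) ^ 2) ^ ((1 : ℂ) / 2)) = Bv
    generalize fbiExp n h y p = Fv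
    ring_nf
    have hI2 : Complex.I ^ 2 = -1 := Complex.I_sq
    have hI3 : Complex.I ^ 3 = -Complex.I := by
      rw [(by ring : Complex.I ^ 3 = Complex.I ^ 2 * Complex.I), hI2]; ring
    have hI4 : Complex.I ^ 4 = 1 := by
      rw [(by ring : Complex.I ^ 4 = Complex.I ^ 2 * Complex.I ^ 2), hI2]; ring
    simp only [hI2, hI3, hI4]
    ring
  rw [Finset.sum_congr rfl (fun m _ => hsum m)]
  rw [Finset.sum_sub_distrib, Finset.sum_const, Finset.card_univ, Fintype.card_fin]
  rw [← Finset.sum_mul, ← Finset.mul_sum]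
  field_simp [hBne]
  ring_nf
  have hI2 : Complex.I ^ 2 = -1 := Complex.I_sq
  have hI3 : Complex.I ^ 3 = -Complex.I := by
    rw [(by ring : Complex.I ^ 3 = Complex.I ^ 2 * Complex.I), hI2]; ring
  have hI4 : Complex.I ^ 4 = 1 := by
    rw [(by ring : Complex.I ^ 4 = Complex.I ^ 2 * Complex.I ^ 2), hI2]; ring
  simp only [hI2, hI3, hI4]
  ring_nf


end
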